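/- For all real numbers z1, z2 with -b ≤ z1 ≤ z2 and all c ≥ 0 (where b > 0), one has 1 ≤ (cosh((z1+b)c)/cosh((z2+b)c)) · e^{(z2-z1)c} ≤ 2. -/

import Mathlib

/-- For all real numbers `z1 ≤ z2` with `-b ≤ z1` and all `c ≥ 0` (where `b > 0`),
`1 ≤ (cosh((z1+b)c)/cosh((z2+b)c)) · e^{(z2-z1)c} ≤ 2`. -/
theorem stmt0 (b : ℝ) (hb : 0 < b) (z1 z2 c : ℝ)
    (h1 : -b ≤ z1) (h2 : z1 ≤ z2) (hc : 0 ≤ c) :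
    1 ≤ Real.cosh ((z1 + b) * c) / Real.cosh ((z2 + b) * c) * Real.exp ((z2 - z1) * c) ∧
    Real.cosh ((z1 + b) * c) / Real.cosh ((z2 + b) * c) * Real.exp ((z2 - z1) * c) ≤ 2 := by
  have ha : 0 ≤ (z1 + b) * c := mul_nonneg (by linarith) hc
  have hA : (z1 + b) * c ≤ (z2 + b) * c := mul_le_mul_of_nonneg_right (by linarith) hc
  set y := Real.exp ((z1 + b) * c) with hy
  set x := Real.exp ((z2 + b) * c) with hx
  have hy1 : 1 ≤ y := Real.one_le_exp ha
  have hxy : y ≤ x := Real.exp_le_exp.2 hA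
  have hxpos : 0 < x := Real.exp_pos _
  have hypos : 0 < y := Real.exp_pos _
  have he : Real.exp ((z2 - z1) * c) = x / y := by
    rw [hx, hy, ← Real.exp_sub]; ring_nf
  have hc1 : Real.cosh ((z1 + b) * c) = (y + 1 / y) / 2 := by
    rw [Real.cosh_eq, Real.exp_neg, ← hy, one_div]
  have hc2 : Real.cosh ((z2 + b) * c) = (x + 1 / x) / 2 := by
    rw [Real.cosh_eq, Real.exp_neg, ← hx, one_div]
  rw [he, hc1, hc2]
  have hd : 0 < (x + 1 / x) / 2 := by positivity
  have hsq : y * y ≤ x * x := mul_le_mul hxy hxy hypos.le hxpos.le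
  have hy2 : 1 ≤ y * y := by nlinarith
  have hden : 0 < x + 1 / x := by positivity
  constructor
  · rw [div_div_div_eq, div_mul_div_comm, le_div_iff₀ (by positivity)]
    field_simp
    nlinarith [mul_pos hxpos hypos]
  · rw [div_div_div_eq, div_mul_div_comm, div_le_iff₀ (by positivity)]
    field_simp
    nlinarith [mul_pos hxpos hypos, mul_le_mul hy2 (le_refl (x*x)) (by positivity) (by positivity : (0:ℝ) ≤ y*y)]
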